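/- Single-bit trace identity: let x ∈ {0,1}^n, q ∈ (0,1), p = 1 − q, and let U be a random trace of x obtained by deleting each bit independently with probability q. Then for every complex z, E_x[ p^{−1} ∑_{j=0}^{n−1} 1_{U_j = 1} ((z − q)/p)^j ] = ∑_{k=0}^{n−1} 1_{x_k = 1} z^k, where U_j is defined to be 2 (so 1_{U_j=1} = 0) if j ≥ |U|. -/

import Mathlib

open Finset

private lemma sort_insert_max {n : ℕ} {S : Finset ℕ} (h : ∀ b ∈ S, b < n) :
    (insert n S).sort (· ≤ ·) = S.sort (· ≤ ·) ++ [n] := by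
  have hn : n ∉ S := fun hmem => lt_irrefl n (h n hmem)
  refine (fun h1 h2 h3 => List.Perm.eq_of_pairwise' (r := (· ≤ ·)) h2 h3 h1) ?_ ?_ ?_
  · have h1 : (S.sort (· ≤ ·) ++ [n]).Perm (n :: S.sort (· ≤ ·)) :=
      List.perm_append_singleton _ _
    refine List.Perm.trans ?_ h1.symm
    apply Multiset.coe_eq_coe.mp
    show ((insert n S).sort (· ≤ ·) : Multiset ℕ) = ↑(n :: S.sort (· ≤ ·))
    rw [← Multiset.cons_coe, Finset.sort_eq,
      Finset.insert_val_of_notMem hn, Finset.sort_eq]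
  · exact Finset.pairwise_sort _ _
  · rw [List.pairwise_append]
    refine ⟨Finset.pairwise_sort _ _, List.pairwise_singleton _ _, ?_⟩
    intro a ha b hb
    simp only [List.mem_singleton] at hb
    subst hb
    exact le_of_lt (h a ((Finset.mem_sort _).mp ha))

private lemma binom_sum (n : ℕ) (a b : ℂ) :
    ∑ S ∈ (Finset.range n).powerset, a ^ S.card * b ^ (n - S.card) = (a + b) ^ n := by
  have := Finset.prod_add (fun _ : ℕ => a) (fun _ : ℕ => b) (Finset.range n)
  simp only [Finset.prod_const, Finset.card_range] at this
  rw [this]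
  apply Finset.sum_congr rfl
  intro S hS
  rw [Finset.card_sdiff_of_subset (Finset.mem_powerset.mp hS), Finset.card_range]

private noncomputable def innerSum (x : ℕ → ℕ) (w : ℂ) (m : ℕ) (S : Finset ℕ) : ℂ :=
  ∑ j ∈ Finset.range m, if ((S.sort (· ≤ ·)).map x).getD j 2 = 1 then w ^ j else 0

private lemma length_map_sort (x : ℕ → ℕ) (S : Finset ℕ) :
    ((S.sort (· ≤ ·)).map x).length = S.card := by
  rw [List.length_map, Finset.length_sort]

private lemma innerSum_succ_notmem (x : ℕ → ℕ) (w : ℂ) (n : ℕ) (S : Finset ℕ)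
    (hS : S ⊆ Finset.range n) :
    innerSum x w (n + 1) S = innerSum x w n S := by
  have hcard : S.card ≤ n :=
    le_trans (Finset.card_le_card hS) (le_of_eq (Finset.card_range n))
  unfold innerSum
  rw [Finset.sum_range_succ]
  have h2 : ((S.sort (· ≤ ·)).map x).getD n 2 = 2 :=
    List.getD_eq_default _ _ (by rw [length_map_sort]; exact hcard)
  rw [h2]
  norm_num

private lemma innerSum_insert (x : ℕ → ℕ) (w : ℂ) (n : ℕ) (S : Finset ℕ)
    (hS : S ⊆ Finset.range n) :
    innerSum x w (n + 1) (insert n S) =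
      innerSum x w n S + (if x n = 1 then w ^ S.card else 0) := by
  have hcard : S.card ≤ n :=
    le_trans (Finset.card_le_card hS) (le_of_eq (Finset.card_range n))
  have hsort : (insert n S).sort (· ≤ ·) = S.sort (· ≤ ·) ++ [n] :=
    sort_insert_max (fun b hb => Finset.mem_range.mp (hS hb))
  set L : List ℕ := (S.sort (· ≤ ·)).map x with hL
  have hlen : L.length = S.card := length_map_sort x S
  have hmap : ((insert n S).sort (· ≤ ·)).map x = L ++ [x n] := by
    rw [hsort, List.map_append]; rfl
  unfold innerSum
  rw [hmap]
  have hmem : S.card ∈ Finset.range (n + 1) :=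
    Finset.mem_range.mpr (Nat.lt_succ_of_le hcard)
  rw [← Finset.add_sum_erase _ _ hmem]
  have hdm : (L ++ [x n]).getD S.card 2 = x n := by
    rw [List.getD_append_right _ _ _ _ (le_of_eq hlen), hlen, Nat.sub_self]
    rfl
  rw [hdm]
  have hcong : ∑ j ∈ (Finset.range (n + 1)).erase S.card,
      (if (L ++ [x n]).getD j 2 = 1 then w ^ j else 0) =
      ∑ j ∈ (Finset.range (n + 1)).erase S.card,
      (if L.getD j 2 = 1 then w ^ j else 0) := by
    apply Finset.sum_congr rfl
    intro j hj
    have hjne : j ≠ S.card := (Finset.mem_erase.mp hj).1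
    rcases lt_or_gt_of_ne hjne with hlt | hgt
    · rw [List.getD_append _ _ _ _ (by rw [hlen]; exact hlt)]
    · rw [List.getD_eq_default _ _ (by simp [hlen]; omega),
        List.getD_eq_default _ _ (by rw [hlen]; exact le_of_lt hgt)]
  rw [hcong]
  have hzero : (if L.getD S.card 2 = 1 then w ^ S.card else (0:ℂ)) = 0 := by
    rw [List.getD_eq_default _ _ (le_of_eq hlen)]
    simp
  rw [Finset.sum_erase _ (by rw [List.getD_eq_default _ _ (le_of_eq hlen)]; simp),
    Finset.sum_range_succ]
  have hn0 : (if L.getD n 2 = 1 then w ^ n else (0:ℂ)) = 0 := by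
    rw [List.getD_eq_default _ _ (by rw [hlen]; exact hcard)]
    simp
  rw [hn0, add_zero, add_comm]

private lemma main_aux (x : ℕ → ℕ) (P Q w : ℂ) (hP : P ≠ 0) (hPQ : P + Q = 1) (n : ℕ) :
    ∑ S ∈ (Finset.range n).powerset,
      (P ^ S.card * Q ^ (n - S.card)) * (P⁻¹ * innerSum x w n S) =
    ∑ k ∈ Finset.range n, if x k = 1 then (P * w + Q) ^ k else 0 := by
  induction n with
  | zero => simp [innerSum]
  | succ n ih =>
    rw [Finset.range_add_one, Finset.powerset_insert]
    have hdisj : Disjoint (Finset.range n).powerset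
        ((Finset.range n).powerset.image (insert n)) := by
      rw [Finset.disjoint_left]
      intro S hS hS'
      obtain ⟨T, hT, rfl⟩ := Finset.mem_image.mp hS'
      have : n ∈ Finset.range n :=
        Finset.mem_powerset.mp hS (Finset.mem_insert_self n T)
      exact absurd this (by simp)
    rw [Finset.sum_union hdisj]
    have hinj : ∀ S ∈ (Finset.range n).powerset, ∀ T ∈ (Finset.range n).powerset,
        insert n S = insert n T → S = T := by
      intro S hS T hT hST
      have hnS : n ∉ S := fun h => by
        simpa using Finset.mem_powerset.mp hS h
      have hnT : n ∉ T := fun h => by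
        simpa using Finset.mem_powerset.mp hT h
      rw [← Finset.erase_insert hnS, ← Finset.erase_insert hnT, hST]
    rw [Finset.sum_image hinj]
    -- first sum
    have e1 : ∑ S ∈ (Finset.range n).powerset,
        (P ^ S.card * Q ^ (n + 1 - S.card)) * (P⁻¹ * innerSum x w (n + 1) S) =
        Q * ∑ S ∈ (Finset.range n).powerset,
        (P ^ S.card * Q ^ (n - S.card)) * (P⁻¹ * innerSum x w n S) := by
      rw [Finset.mul_sum]
      apply Finset.sum_congr rfl
      intro S hS
      have hsub := Finset.mem_powerset.mp hS
      have hcard : S.card ≤ n :=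
        le_trans (Finset.card_le_card hsub) (le_of_eq (Finset.card_range n))
      rw [innerSum_succ_notmem x w n S hsub, Nat.succ_sub hcard, pow_succ]
      ring
    -- second sum
    have e2 : ∑ S ∈ (Finset.range n).powerset,
        (P ^ (insert n S).card * Q ^ (n + 1 - (insert n S).card)) *
          (P⁻¹ * innerSum x w (n + 1) (insert n S)) =
        P * (∑ S ∈ (Finset.range n).powerset,
          (P ^ S.card * Q ^ (n - S.card)) * (P⁻¹ * innerSum x w n S)) +
        (if x n = 1 then ((P * w) + Q) ^ n else 0) := by
      have e2' : ∀ S ∈ (Finset.range n).powerset,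
          (P ^ (insert n S).card * Q ^ (n + 1 - (insert n S).card)) *
            (P⁻¹ * innerSum x w (n + 1) (insert n S)) =
          P * ((P ^ S.card * Q ^ (n - S.card)) * (P⁻¹ * innerSum x w n S)) +
          (if x n = 1 then (P * w) ^ S.card * Q ^ (n - S.card) else 0) := by
        intro S hS
        have hsub := Finset.mem_powerset.mp hS
        have hnS : n ∉ S := fun h => by simpa using hsub h
        rw [Finset.card_insert_of_notMem hnS, Nat.succ_sub_succ,
          innerSum_insert x w n S hsub]
        by_cases hxn : x n = 1
        · simp only [if_pos hxn]
          field_simp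
          ring
        · simp only [if_neg hxn, add_zero]
          ring
      rw [Finset.sum_congr rfl e2', Finset.sum_add_distrib, ← Finset.mul_sum]
      congr 1
      by_cases hxn : x n = 1
      · simp only [if_pos hxn]
        exact binom_sum n (P * w) Q
      · simp [hxn]
    rw [e1, e2, ih, Finset.sum_insert (by simp)]
    linear_combination (∑ k ∈ Finset.range n, if x k = 1 then (P * w + Q) ^ k else 0) * hPQ

theorem single_bit_trace_identity (n : ℕ) (q : ℝ) (hq : q ∈ Set.Ioo (0:ℝ) 1)
    (p : ℝ) (hp : p = 1 - q) (x : ℕ → ℕ) (hx : ∀ k, x k ≤ 1) (z : ℂ) :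
    ∑ S ∈ (Finset.range n).powerset,
        ((p : ℂ) ^ S.card * (q : ℂ) ^ (n - S.card)) *
          ((p : ℂ)⁻¹ * ∑ j ∈ Finset.range n,
            if ((S.sort (· ≤ ·)).map x).getD j 2 = 1 then ((z - q) / p) ^ j else 0) =
      ∑ k ∈ Finset.range n, if x k = 1 then z ^ k else 0 := by
  have hp0 : p ≠ 0 := by
    have := hq.2
    rw [hp]; linarith
  have hP : (p : ℂ) ≠ 0 := by exact_mod_cast hp0
  have hPQ : (p : ℂ) + (q : ℂ) = 1 := by
    rw [hp]; push_cast; ring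
  have hz : (p : ℂ) * ((z - q) / p) + q = z := by
    field_simp
    ring
  have := main_aux x (p : ℂ) (q : ℂ) ((z - q) / p) hP hPQ n
  rw [hz] at this
  exact this
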